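/- Invariant region: Let Ω = Ω_h × Ω_v where Ω_h = {(S_h, I_h, R_h) ∈ ℝ₊³ : S_h + I_h + R_h ≤ Λ_h/α_h} and Ω_v = {(S_v, I_v) ∈ ℝ₊² : S_v + I_v ≤ Λ_v/α_v}. If (S_h, I_h, R_h, S_v, I_v) is a differentiable solution of the SIRS malaria system on [0, ∞) whose initial value lies in Ω (with N_h(t) > 0 for all t), then the solution remains in Ω for all t ≥ 0; in particular S_h(t)+I_h(t)+R_h(t) ≤ Λ_h/α_h and S_v(t)+I_v(t) ≤ Λ_v/α_v for all t ≥ 0. -/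

import Mathlib

open Set Filter Real
open scoped Topology

set_option maxHeartbeats 1000000


lemma sirs_mul_q (a : ℝ) : min a 0 * a = (min a 0) ^ 2 := by
  rcases le_total a 0 with h | h
  · rw [min_eq_left h]; ring
  · rw [min_eq_right h]; ring

lemma sirs_cross (a b : ℝ) : min a 0 * b ≤ ((min a 0) ^ 2 + (min b 0) ^ 2) / 2 := by
  have h1 : min a 0 ≤ 0 := min_le_right a 0
  have h2 : min b 0 ≤ b := min_le_left b 0
  have h3 : min a 0 * b ≤ min a 0 * min b 0 := mul_le_mul_of_nonpos_left h2 h1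
  nlinarith [sq_nonneg (min a 0 - min b 0)]

lemma sirs_cube {b c M : ℝ} (a : ℝ) (hb : |b| ≤ M) (hc : |c| ≤ M) :
    min a 0 * (b * c) ≤ M * ((min a 0) ^ 2 + (min b 0) ^ 2 + (min c 0) ^ 2) := by
  have hM : 0 ≤ M := (abs_nonneg b).trans hb
  obtain ⟨hb1, hb2⟩ := abs_le.1 hb
  obtain ⟨hc1, hc2⟩ := abs_le.1 hc
  rcases le_total a 0 with ha | ha
  · rw [min_eq_left ha]
    rcases le_total b 0 with hb0 | hb0 <;> rcases le_total c 0 with hc0 | hc0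
    · rw [min_eq_left hb0, min_eq_left hc0]
      have hbc : 0 ≤ b * c := by nlinarith [mul_nonneg (neg_nonneg.2 hb0) (neg_nonneg.2 hc0)]
      have habc : a * (b * c) ≤ 0 := mul_nonpos_of_nonpos_of_nonneg ha hbc
      nlinarith [sq_nonneg a, sq_nonneg b, sq_nonneg c, mul_nonneg hM (sq_nonneg a),
        mul_nonneg hM (sq_nonneg b), mul_nonneg hM (sq_nonneg c)]
    · rw [min_eq_left hb0, min_eq_right hc0]
      nlinarith [mul_nonneg (neg_nonneg.2 ha) (neg_nonneg.2 hb0), sq_nonneg (a - b),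
        sq_nonneg (a + b), sq_nonneg c]
    · rw [min_eq_right hb0, min_eq_left hc0]
      nlinarith [mul_nonneg (neg_nonneg.2 ha) (neg_nonneg.2 hc0), sq_nonneg (a - c),
        sq_nonneg (a + c), sq_nonneg b]
    · rw [min_eq_right hb0, min_eq_right hc0]
      have habc : a * (b * c) ≤ 0 := mul_nonpos_of_nonpos_of_nonneg ha (mul_nonneg hb0 hc0)
      nlinarith [mul_nonneg hM (sq_nonneg a)]
  · rw [min_eq_right ha]
    have : (0:ℝ) ≤ (min b 0) ^ 2 + (min c 0) ^ 2 := by positivity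
    nlinarith [sq_nonneg (min b 0), sq_nonneg (min c 0)]

/-- Bound for the `Sh` (and `Sv`) equations. -/
lemma sirs_term1 {Λ β ω α S I R u M mi : ℝ} (hΛ : 0 ≤ Λ) (hβ : 0 ≤ β) (hω : 0 ≤ ω)
    (hα : 0 ≤ α) (hu : 0 ≤ u) (hum : u ≤ mi) (hI : -I ≤ M) (hM : 0 ≤ M) :
    2 * min S 0 * (Λ - β * S * I * u + ω * R - α * S) ≤
      (ω + 2 * β * M * mi) * (min S 0) ^ 2 + ω * (min R 0) ^ 2 := by
  have hmi : 0 ≤ mi := hu.trans hum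
  have hq : min S 0 * S = (min S 0) ^ 2 := sirs_mul_q S
  have hS0 : min S 0 ≤ 0 := min_le_right S 0
  have f1 : 2 * min S 0 * Λ ≤ 0 := mul_nonpos_of_nonpos_of_nonneg (by linarith) hΛ
  have f3 : min S 0 * R ≤ ((min S 0) ^ 2 + (min R 0) ^ 2) / 2 := sirs_cross S R
  -- the division-type term
  have g1 : (min S 0) ^ 2 * (-I) * u ≤ (min S 0) ^ 2 * M * u :=
    mul_le_mul_of_nonneg_right (mul_le_mul_of_nonneg_left hI (sq_nonneg _)) hu
  have g2 : (min S 0) ^ 2 * M * u ≤ (min S 0) ^ 2 * M * mi :=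
    mul_le_mul_of_nonneg_left hum (mul_nonneg (sq_nonneg _) hM)
  have expand : 2 * min S 0 * (Λ - β * S * I * u + ω * R - α * S) =
      2 * min S 0 * Λ + 2 * β * ((min S 0) ^ 2 * (-I) * u) + 2 * ω * (min S 0 * R)
        - 2 * α * (min S 0) ^ 2 := by
    linear_combination ((-2) * β * I * u - 2 * α) * hq
  rw [expand]
  linarith [mul_nonneg hα (sq_nonneg (min S 0)),
    mul_le_mul_of_nonneg_left (g1.trans g2) hβ,
    mul_le_mul_of_nonneg_left f3 hω]

/-- Bound for the `Ih` (and `Iv`) equations. -/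
lemma sirs_term2 {β c S V I u M mi : ℝ} (hβ : 0 ≤ β) (hc : 0 ≤ c) (hu : 0 ≤ u)
    (hum : u ≤ mi) (hS : |S| ≤ M) (hV : |V| ≤ M) :
    2 * min I 0 * (β * S * V * u - c * I) ≤
      2 * β * mi * M * ((min I 0) ^ 2 + (min S 0) ^ 2 + (min V 0) ^ 2) := by
  have hM : 0 ≤ M := (abs_nonneg S).trans hS
  have hmi : 0 ≤ mi := hu.trans hum
  have hcube : min I 0 * (S * V) ≤ M * ((min I 0) ^ 2 + (min S 0) ^ 2 + (min V 0) ^ 2) :=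
    sirs_cube I hS hV
  have hq : (0:ℝ) ≤ min I 0 * I := by rw [sirs_mul_q]; positivity
  have hQ : (0:ℝ) ≤ M * ((min I 0) ^ 2 + (min S 0) ^ 2 + (min V 0) ^ 2) := by positivity
  have f1 : β * u * (min I 0 * (S * V)) ≤
      β * u * (M * ((min I 0) ^ 2 + (min S 0) ^ 2 + (min V 0) ^ 2)) :=
    mul_le_mul_of_nonneg_left hcube (mul_nonneg hβ hu)
  have f2 : β * u * (M * ((min I 0) ^ 2 + (min S 0) ^ 2 + (min V 0) ^ 2)) ≤
      β * mi * (M * ((min I 0) ^ 2 + (min S 0) ^ 2 + (min V 0) ^ 2)) :=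
    mul_le_mul_of_nonneg_right (by nlinarith) hQ
  nlinarith [mul_nonneg hc hq]

/-- Bound for the `Rh` equation. -/
lemma sirs_term3 {γ d I R : ℝ} (hγ : 0 ≤ γ) (hd : 0 ≤ d) :
    2 * min R 0 * (γ * I - d * R) ≤ γ * ((min R 0) ^ 2 + (min I 0) ^ 2) := by
  have f3 : min R 0 * I ≤ ((min R 0) ^ 2 + (min I 0) ^ 2) / 2 := sirs_cross R I
  have hq : (0:ℝ) ≤ min R 0 * R := by rw [sirs_mul_q]; positivity
  nlinarith [mul_le_mul_of_nonneg_left f3 hγ, mul_nonneg hd hq]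


/-- One-sided Grönwall: differentiable `f` with `f' ≤ K f` and `f a ≤ 0` stays `≤ 0`. -/
lemma sirs_gron0 {f f' : ℝ → ℝ} {K a b : ℝ}
    (hf : ContinuousOn f (Icc a b))
    (hd : ∀ x ∈ Ico a b, HasDerivAt f (f' x) x)
    (ha : f a ≤ 0) (bound : ∀ x ∈ Ico a b, f' x ≤ K * f x) :
    ∀ x ∈ Icc a b, f x ≤ 0 := by
  have h := le_gronwallBound_of_liminf_deriv_right_le (δ := 0) (K := K) (ε := 0) hf
    (fun x hx r hr => by
      have := (hasDerivAt_iff_tendsto_slope.1 (hd x hx)).mono_left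
        (nhdsWithin_mono x (fun z hz => ne_of_gt hz : Ioi x ⊆ {x}ᶜ))
      have hev : ∀ᶠ z in 𝓝[>] x, (z - x)⁻¹ * (f z - f x) < r := by
        filter_upwards [this.eventually (eventually_lt_nhds hr)] with z hz
        simpa [slope_def_field, div_eq_inv_mul] using hz
      exact hev.frequently)
    ha (fun x hx => by simpa using bound x hx)
  intro x hx
  simpa [gronwallBound_ε0_δ0] using h x hx

lemma sirs_hasDerivAt_minsq (x : ℝ) :
    HasDerivAt (fun y : ℝ => (min y 0) ^ 2) (2 * min x 0) x := by
  rcases lt_trichotomy x 0 with h | h | h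
  · have h2 : HasDerivAt (fun y : ℝ => y ^ 2) (2 * x) x := by
      simpa using hasDerivAt_pow 2 x
    have : (fun y : ℝ => (min y 0) ^ 2) =ᶠ[𝓝 x] fun y : ℝ => y ^ 2 := by
      filter_upwards [Iio_mem_nhds h] with y hy
      rw [min_eq_left (le_of_lt hy)]
    simpa [min_eq_left h.le] using h2.congr_of_eventuallyEq this
  · subst h
    rw [hasDerivAt_iff_isLittleO]
    simp only [min_self, ne_eq, OfNat.ofNat_ne_zero, not_false_eq_true, zero_pow, sub_zero,
      mul_zero, smul_eq_mul, sub_self, min_eq_right le_rfl]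
    rw [Asymptotics.isLittleO_iff]
    intro c hc
    filter_upwards [Metric.ball_mem_nhds 0 hc] with y hy
    have h1 : |min y 0| ≤ |y| := by
      rcases le_total y 0 with h | h
      · rw [min_eq_left h]
      · simp [min_eq_right h, abs_nonneg]
    have hy' : |y| ≤ c := by
      have := mem_ball_iff_norm.1 hy
      simpa using this.le
    calc ‖(min y 0) ^ 2‖ = |min y 0| ^ 2 := by
            rw [Real.norm_eq_abs, abs_pow, sq_abs]
      _ ≤ |y| ^ 2 := pow_le_pow_left₀ (abs_nonneg _) h1 2
      _ = |y| * |y| := sq |y|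
      _ ≤ c * |y| := mul_le_mul_of_nonneg_right hy' (abs_nonneg _)
      _ = c * ‖y‖ := by rw [Real.norm_eq_abs]
  · have : (fun y : ℝ => (min y 0) ^ 2) =ᶠ[𝓝 x] fun _ : ℝ => (0:ℝ) ^ 2 := by
      filter_upwards [Ioi_mem_nhds h] with y hy
      rw [min_eq_right (le_of_lt hy)]
    simpa [min_eq_right h.le] using (hasDerivAt_const x ((0:ℝ)^2)).congr_of_eventuallyEq this


lemma sirs_sq0 {a : ℝ} (h : (min a 0) ^ 2 ≤ 0) : 0 ≤ a := by
  have h2 := sq_nonneg (min a 0)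
  have h0 : (min a 0) ^ 2 = 0 := le_antisymm h h2
  have := pow_eq_zero_iff (n := 2) (by norm_num) |>.1 h0
  exact min_eq_right_iff.1 this

/-- Invariant region: if a differentiable solution of the SIRS malaria system starts in
`Ω = Ω_h × Ω_v`, where `Ω_h = {(S_h,I_h,R_h) ∈ ℝ₊³ : S_h+I_h+R_h ≤ Λ_h/α_h}` and
`Ω_v = {(S_v,I_v) ∈ ℝ₊² : S_v+I_v ≤ Λ_v/α_v}`, then it remains in `Ω` for all `t ≥ 0`. -/
theorem sirs_malaria_invariant_region
    (Λh αh βh γh ρh ωh Λv αv βv : ℝ)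
    (hΛh : 0 < Λh) (hαh : 0 < αh) (hβh : 0 < βh) (hγh : 0 < γh) (hρh : 0 < ρh)
    (hωh : 0 < ωh) (hΛv : 0 < Λv) (hαv : 0 < αv) (hβv : 0 < βv)
    (Sh Ih Rh Sv Iv Nh : ℝ → ℝ)
    (hNh : ∀ t, Nh t = Sh t + Ih t + Rh t)
    (hNhpos : ∀ t, 0 ≤ t → 0 < Nh t)
    (hSh : ∀ t, 0 ≤ t →
      HasDerivAt Sh (Λh - βh * Sh t * Iv t / Nh t + ωh * Rh t - αh * Sh t) t)
    (hIh : ∀ t, 0 ≤ t →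
      HasDerivAt Ih (βh * Sh t * Iv t / Nh t - (γh + ρh + αh) * Ih t) t)
    (hRh : ∀ t, 0 ≤ t →
      HasDerivAt Rh (γh * Ih t - (ωh + αh) * Rh t) t)
    (hSv : ∀ t, 0 ≤ t →
      HasDerivAt Sv (Λv - βv * Sv t * Ih t / Nh t - αv * Sv t) t)
    (hIv : ∀ t, 0 ≤ t →
      HasDerivAt Iv (βv * Sv t * Ih t / Nh t - αv * Iv t) t)
    -- initial value lies in Ω = Ω_h × Ω_v
    (hSh0 : 0 ≤ Sh 0) (hIh0 : 0 ≤ Ih 0) (hRh0 : 0 ≤ Rh 0)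
    (hSv0 : 0 ≤ Sv 0) (hIv0 : 0 ≤ Iv 0)
    (hΩh0 : Sh 0 + Ih 0 + Rh 0 ≤ Λh / αh)
    (hΩv0 : Sv 0 + Iv 0 ≤ Λv / αv) :
    ∀ t, 0 ≤ t →
      (0 ≤ Sh t ∧ 0 ≤ Ih t ∧ 0 ≤ Rh t ∧ Sh t + Ih t + Rh t ≤ Λh / αh) ∧
      (0 ≤ Sv t ∧ 0 ≤ Iv t ∧ Sv t + Iv t ≤ Λv / αv) := by
  intro T hT
  have hTmem : T ∈ Icc (0:ℝ) T := ⟨hT, le_rfl⟩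
  have h0mem : (0:ℝ) ∈ Icc (0:ℝ) T := ⟨le_rfl, hT⟩
  -- continuity on [0, T]
  have cSh : ContinuousOn Sh (Icc 0 T) := fun x hx => (hSh x hx.1).continuousAt.continuousWithinAt
  have cIh : ContinuousOn Ih (Icc 0 T) := fun x hx => (hIh x hx.1).continuousAt.continuousWithinAt
  have cRh : ContinuousOn Rh (Icc 0 T) := fun x hx => (hRh x hx.1).continuousAt.continuousWithinAt
  have cSv : ContinuousOn Sv (Icc 0 T) := fun x hx => (hSv x hx.1).continuousAt.continuousWithinAt
  have cIv : ContinuousOn Iv (Icc 0 T) := fun x hx => (hIv x hx.1).continuousAt.continuousWithinAt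
  have cNh : ContinuousOn Nh (Icc 0 T) := ((cSh.add cIh).add cRh).congr (fun x _ => hNh x)
  -- positive lower bound for Nh
  obtain ⟨tm, htm, hminOn⟩ := isCompact_Icc.exists_isMinOn (nonempty_Icc.2 hT) cNh
  have hm : 0 < Nh tm := hNhpos tm htm.1
  have hmi0 : 0 ≤ (Nh tm)⁻¹ := by positivity
  -- uniform bound M
  obtain ⟨M1, hM1⟩ := isCompact_Icc.exists_bound_of_continuousOn cSh
  obtain ⟨M2, hM2⟩ := isCompact_Icc.exists_bound_of_continuousOn cIh
  obtain ⟨M3, hM3⟩ := isCompact_Icc.exists_bound_of_continuousOn cRh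
  obtain ⟨M4, hM4⟩ := isCompact_Icc.exists_bound_of_continuousOn cSv
  obtain ⟨M5, hM5⟩ := isCompact_Icc.exists_bound_of_continuousOn cIv
  set M := max M1 (max M2 (max M3 (max M4 M5))) with hMdef
  have bSh : ∀ x ∈ Icc 0 T, |Sh x| ≤ M := fun x hx => (hM1 x hx).trans (le_max_left _ _)
  have bIh : ∀ x ∈ Icc 0 T, |Ih x| ≤ M := fun x hx =>
    (hM2 x hx).trans (le_max_of_le_right (le_max_left _ _))
  have bRh : ∀ x ∈ Icc 0 T, |Rh x| ≤ M := fun x hx =>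
    (hM3 x hx).trans (le_max_of_le_right (le_max_of_le_right (le_max_left _ _)))
  have bSv : ∀ x ∈ Icc 0 T, |Sv x| ≤ M := fun x hx =>
    (hM4 x hx).trans (le_max_of_le_right (le_max_of_le_right (le_max_of_le_right
      (le_max_left _ _))))
  have bIv : ∀ x ∈ Icc 0 T, |Iv x| ≤ M := fun x hx =>
    (hM5 x hx).trans (le_max_of_le_right (le_max_of_le_right (le_max_of_le_right
      (le_max_right _ _))))
  have hM0 : 0 ≤ M := (abs_nonneg (Sh 0)).trans (bSh 0 h0mem)
  -- the Lyapunov-type function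
  have cq : Continuous (fun y : ℝ => (min y 0) ^ 2) := ((continuous_id.min continuous_const).pow 2)
  have hFcont : ContinuousOn (fun t => (min (Sh t) 0) ^ 2 + (min (Ih t) 0) ^ 2 +
      (min (Rh t) 0) ^ 2 + (min (Sv t) 0) ^ 2 + (min (Iv t) 0) ^ 2) (Icc 0 T) :=
    ((((cq.comp_continuousOn cSh).add (cq.comp_continuousOn cIh)).add
      (cq.comp_continuousOn cRh)).add (cq.comp_continuousOn cSv)).add (cq.comp_continuousOn cIv)
  have hFd : ∀ x ∈ Ico (0:ℝ) T, HasDerivAt (fun t => (min (Sh t) 0) ^ 2 + (min (Ih t) 0) ^ 2 +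
      (min (Rh t) 0) ^ 2 + (min (Sv t) 0) ^ 2 + (min (Iv t) 0) ^ 2)
      (2 * min (Sh x) 0 * (Λh - βh * Sh x * Iv x / Nh x + ωh * Rh x - αh * Sh x) +
       2 * min (Ih x) 0 * (βh * Sh x * Iv x / Nh x - (γh + ρh + αh) * Ih x) +
       2 * min (Rh x) 0 * (γh * Ih x - (ωh + αh) * Rh x) +
       2 * min (Sv x) 0 * (Λv - βv * Sv x * Ih x / Nh x - αv * Sv x) +
       2 * min (Iv x) 0 * (βv * Sv x * Ih x / Nh x - αv * Iv x)) x := by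
    intro x hx
    have h1 := (sirs_hasDerivAt_minsq (Sh x)).comp x (hSh x hx.1)
    have h2 := (sirs_hasDerivAt_minsq (Ih x)).comp x (hIh x hx.1)
    have h3 := (sirs_hasDerivAt_minsq (Rh x)).comp x (hRh x hx.1)
    have h4 := (sirs_hasDerivAt_minsq (Sv x)).comp x (hSv x hx.1)
    have h5 := (sirs_hasDerivAt_minsq (Iv x)).comp x (hIv x hx.1)
    have := (((h1.add h2).add h3).add h4).add h5
    exact this
  set K := ωh + γh + 4 * (βh + βv) * (M * (Nh tm)⁻¹) with hKdef
  have hbound : ∀ x ∈ Ico (0:ℝ) T,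
      (2 * min (Sh x) 0 * (Λh - βh * Sh x * Iv x / Nh x + ωh * Rh x - αh * Sh x) +
       2 * min (Ih x) 0 * (βh * Sh x * Iv x / Nh x - (γh + ρh + αh) * Ih x) +
       2 * min (Rh x) 0 * (γh * Ih x - (ωh + αh) * Rh x) +
       2 * min (Sv x) 0 * (Λv - βv * Sv x * Ih x / Nh x - αv * Sv x) +
       2 * min (Iv x) 0 * (βv * Sv x * Ih x / Nh x - αv * Iv x)) ≤
      K * ((min (Sh x) 0) ^ 2 + (min (Ih x) 0) ^ 2 + (min (Rh x) 0) ^ 2 + (min (Sv x) 0) ^ 2 +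
        (min (Iv x) 0) ^ 2) := by
    intro x hx
    have hx' : x ∈ Icc (0:ℝ) T := ⟨hx.1, hx.2.le⟩
    have hNxp : 0 < Nh x := hNhpos x hx.1
    have hu0 : 0 ≤ (Nh x)⁻¹ := by positivity
    have hum : (Nh x)⁻¹ ≤ (Nh tm)⁻¹ := by
      apply inv_anti₀ hm (hminOn hx')
    have e1 : βh * Sh x * Iv x / Nh x = βh * Sh x * Iv x * (Nh x)⁻¹ := div_eq_mul_inv _ _
    have e2 : βv * Sv x * Ih x / Nh x = βv * Sv x * Ih x * (Nh x)⁻¹ := div_eq_mul_inv _ _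
    have hIvM : -(Iv x) ≤ M := by have := abs_le.1 (bIv x hx'); linarith [this.1]
    have hIhM : -(Ih x) ≤ M := by have := abs_le.1 (bIh x hx'); linarith [(abs_le.1 (bIh x hx')).1]
    rw [e1, e2]
    have B1 := sirs_term1 (Λ := Λh) (β := βh) (ω := ωh) (α := αh) (S := Sh x) (I := Iv x)
      (R := Rh x) (u := (Nh x)⁻¹) (M := M) (mi := (Nh tm)⁻¹)
      hΛh.le hβh.le hωh.le hαh.le hu0 hum hIvM hM0
    have B2 := sirs_term2 (β := βh) (c := γh + ρh + αh) (S := Sh x) (V := Iv x) (I := Ih x)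
      (u := (Nh x)⁻¹) (M := M) (mi := (Nh tm)⁻¹)
      hβh.le (by positivity) hu0 hum (bSh x hx') (bIv x hx')
    have B3 := sirs_term3 (γ := γh) (d := ωh + αh) (I := Ih x) (R := Rh x)
      hγh.le (by positivity)
    have B4 := sirs_term1 (Λ := Λv) (β := βv) (ω := 0) (α := αv) (S := Sv x) (I := Ih x)
      (R := 0) (u := (Nh x)⁻¹) (M := M) (mi := (Nh tm)⁻¹)
      hΛv.le hβv.le le_rfl hαv.le hu0 hum hIhM hM0
    have B5 := sirs_term2 (β := βv) (c := αv) (S := Sv x) (V := Ih x) (I := Iv x)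
      (u := (Nh x)⁻¹) (M := M) (mi := (Nh tm)⁻¹)
      hβv.le hαv.le hu0 hum (bSv x hx') (bIh x hx')
    have c0 : 0 ≤ M * (Nh tm)⁻¹ := mul_nonneg hM0 hmi0
    have pSh := sq_nonneg (min (Sh x) 0)
    have pIh := sq_nonneg (min (Ih x) 0)
    have pRh := sq_nonneg (min (Rh x) 0)
    have pSv := sq_nonneg (min (Sv x) 0)
    have pIv := sq_nonneg (min (Iv x) 0)
    rw [hKdef]
    linarith [B1, B2, B3, B4, B5,
      mul_nonneg (mul_nonneg hβh.le c0) pSh, mul_nonneg (mul_nonneg hβh.le c0) pIh,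
      mul_nonneg (mul_nonneg hβh.le c0) pRh, mul_nonneg (mul_nonneg hβh.le c0) pSv,
      mul_nonneg (mul_nonneg hβh.le c0) pIv,
      mul_nonneg (mul_nonneg hβv.le c0) pSh, mul_nonneg (mul_nonneg hβv.le c0) pIh,
      mul_nonneg (mul_nonneg hβv.le c0) pRh, mul_nonneg (mul_nonneg hβv.le c0) pSv,
      mul_nonneg (mul_nonneg hβv.le c0) pIv,
      mul_nonneg hωh.le pSh, mul_nonneg hωh.le pIh, mul_nonneg hωh.le pRh,
      mul_nonneg hωh.le pSv, mul_nonneg hωh.le pIv,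
      mul_nonneg hγh.le pSh, mul_nonneg hγh.le pIh, mul_nonneg hγh.le pRh,
      mul_nonneg hγh.le pSv, mul_nonneg hγh.le pIv]
  have hF0 : (min (Sh 0) 0) ^ 2 + (min (Ih 0) 0) ^ 2 + (min (Rh 0) 0) ^ 2 + (min (Sv 0) 0) ^ 2 +
      (min (Iv 0) 0) ^ 2 ≤ 0 := by
    rw [min_eq_right hSh0, min_eq_right hIh0, min_eq_right hRh0, min_eq_right hSv0,
      min_eq_right hIv0]
    norm_num
  have hFle := sirs_gron0 hFcont hFd hF0 hbound
  have nn : ∀ x ∈ Icc (0:ℝ) T, 0 ≤ Sh x ∧ 0 ≤ Ih x ∧ 0 ≤ Rh x ∧ 0 ≤ Sv x ∧ 0 ≤ Iv x := by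
    intro x hx
    have hFx := hFle x hx
    have pSh := sq_nonneg (min (Sh x) 0)
    have pIh := sq_nonneg (min (Ih x) 0)
    have pRh := sq_nonneg (min (Rh x) 0)
    have pSv := sq_nonneg (min (Sv x) 0)
    have pIv := sq_nonneg (min (Iv x) 0)
    exact ⟨sirs_sq0 (by linarith), sirs_sq0 (by linarith), sirs_sq0 (by linarith),
      sirs_sq0 (by linarith), sirs_sq0 (by linarith)⟩
  -- human population bound
  have hαΛ : αh * (Λh / αh) = Λh := mul_div_cancel₀ _ (ne_of_gt hαh)
  have hHd : ∀ x ∈ Ico (0:ℝ) T, HasDerivAt (fun t => Sh t + Ih t + Rh t - Λh / αh)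
      (Λh - αh * (Sh x + Ih x + Rh x) - ρh * Ih x) x := by
    intro x hx
    have := (((hSh x hx.1).add (hIh x hx.1)).add (hRh x hx.1)).sub_const (Λh / αh)
    exact this.congr_deriv (by ring)
  have hH := sirs_gron0 (f := fun t => Sh t + Ih t + Rh t - Λh / αh) (K := -αh) (((cSh.add cIh).add cRh).sub continuousOn_const) hHd
    (by linarith)
    (fun x hx => by
      have hIhx := (nn x ⟨hx.1, hx.2.le⟩).2.1
      have : 0 ≤ ρh * Ih x := mul_nonneg hρh.le hIhx
      nlinarith)
  -- vector population bound
  have hαΛv : αv * (Λv / αv) = Λv := mul_div_cancel₀ _ (ne_of_gt hαv)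
  have hVd : ∀ x ∈ Ico (0:ℝ) T, HasDerivAt (fun t => Sv t + Iv t - Λv / αv)
      (Λv - αv * (Sv x + Iv x)) x := by
    intro x hx
    have := ((hSv x hx.1).add (hIv x hx.1)).sub_const (Λv / αv)
    exact this.congr_deriv (by ring)
  have hV := sirs_gron0 (f := fun t => Sv t + Iv t - Λv / αv) (K := -αv) ((cSv.add cIv).sub continuousOn_const) hVd
    (by linarith)
    (fun x hx => by nlinarith)
  obtain ⟨n1, n2, n3, n4, n5⟩ := nn T hTmem
  have hHT := hH T hTmem
  have hVT := hV T hTmem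
  exact ⟨⟨n1, n2, n3, by linarith⟩, ⟨n4, n5, by linarith⟩⟩
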